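/- Let m ≥ 1, let V be a nonempty finite type of voters, and let σ : V → (Fin m ≃ Fin m) be a profile of rankings. Call a candidate c a Condorcet winner of a profile h if for every candidate d ≠ c, card {v | h_v c < h_v d} > card {v | h_v d < h_v c}. Define the Dodgson′ score of a candidate c under σ as the least k ∈ ℕ such that there exists a profile τ with card {v | τ v ≠ σ v} ≤ k of which c is a Condorcet winner. If c is a Condorcet winner of σ, then the Dodgson′ score of c equals 0, and the Dodgson′ score of every candidate d ≠ c is at least 1; in particular, c is the unique candidate of minimal Dodgson′ score. -/
import Mathlib


/-- `c` is a Condorcet winner of the profile `h`: for every other candidate `d`, more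
voters prefer `c` to `d` (rank `c` at a smaller position) than prefer `d` to `c`. -/
def IsCondorcetWinner {m : ℕ} {V : Type*} [Fintype V]
    (h : V → (Fin m ≃ Fin m)) (c : Fin m) : Prop :=
  ∀ d : Fin m, d ≠ c → {v | h v d < h v c}.ncard < {v | h v c < h v d}.ncard

/-- The Dodgson′ score of `c` under the profile `σ`: the least number of voters whose
entire vote must be replaced to make `c` a Condorcet winner. -/
noncomputable def dodgson'Score {m : ℕ} {V : Type*} [Fintype V]
    (σ : V → (Fin m ≃ Fin m)) (c : Fin m) : ℕ :=
  sInf {k : ℕ | ∃ τ : V → (Fin m ≃ Fin m),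
    {v | τ v ≠ σ v}.ncard ≤ k ∧ IsCondorcetWinner τ c}

/-- Dodgson′ elects the Condorcet winner whenever one exists: a Condorcet winner `c`
has Dodgson′ score `0`, every other candidate has Dodgson′ score at least `1`, and so
`c` is the unique candidate of minimal Dodgson′ score. -/
theorem dodgson'_elects_condorcet_winner
    (m : ℕ) (hm : 1 ≤ m) {V : Type*} [Fintype V] [Nonempty V]
    (σ : V → (Fin m ≃ Fin m)) (c : Fin m) (hc : IsCondorcetWinner σ c) :
    dodgson'Score σ c = 0 ∧
    (∀ d : Fin m, d ≠ c → 1 ≤ dodgson'Score σ d) ∧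
    (∀ d : Fin m, (∀ e : Fin m, dodgson'Score σ d ≤ dodgson'Score σ e) → d = c) := by
  have hzero : dodgson'Score σ c = 0 := by
    apply Nat.eq_zero_of_le_zero
    apply Nat.sInf_le
    exact ⟨σ, by simp, hc⟩
  have hone : ∀ d : Fin m, d ≠ c → 1 ≤ dodgson'Score σ d := by
    intro d hd
    rw [Nat.one_le_iff_ne_zero]
    intro h0
    -- the set is nonempty: everyone ranks d first
    have hne : {k : ℕ | ∃ τ : V → (Fin m ≃ Fin m),
        {v | τ v ≠ σ v}.ncard ≤ k ∧ IsCondorcetWinner τ d}.Nonempty := by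
      refine ⟨Fintype.card V, fun _ => Equiv.swap d ⟨0, hm⟩, ?_, ?_⟩
      · exact le_trans (Set.ncard_le_ncard (Set.subset_univ _) Set.finite_univ)
          (by simp [Set.ncard_univ])
      · intro e he
        have h1 : {v : V | Equiv.swap d ⟨0, hm⟩ e < Equiv.swap d ⟨0, hm⟩ d} = ∅ := by
          ext v
          simp only [Set.mem_setOf_eq, Set.mem_empty_iff_false, iff_false, not_lt]
          rw [Equiv.swap_apply_left, Fin.le_def]
          have : ((⟨0, hm⟩ : Fin m)).val = 0 := rfl
          omega
        have h2 : {v : V | Equiv.swap d ⟨0, hm⟩ d < Equiv.swap d ⟨0, hm⟩ e} = Set.univ := by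
          ext v
          simp only [Set.mem_setOf_eq, Set.mem_univ, iff_true]
          rw [Equiv.swap_apply_left]
          have hne0 : Equiv.swap d ⟨0, hm⟩ e ≠ ⟨0, hm⟩ := fun h => he
            ((Equiv.swap d ⟨0, hm⟩).injective (h.trans (Equiv.swap_apply_left d ⟨0, hm⟩).symm))
          have h' : (Equiv.swap d ⟨0, hm⟩ e).val ≠ 0 := fun h => hne0 (Fin.ext h)
          rw [Fin.lt_def]
          have : ((⟨0, hm⟩ : Fin m)).val = 0 := rfl
          omega
        rw [h1, h2]
        simp only [Set.ncard_empty, Set.ncard_univ, Nat.card_eq_fintype_card]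
        exact Fintype.card_pos
    have hmem := Nat.sInf_mem hne
    rw [show sInf _ = dodgson'Score σ d from rfl, h0] at hmem
    obtain ⟨τ, hτ, hwin⟩ := hmem
    have hempty : {v | τ v ≠ σ v} = ∅ :=
      Set.ncard_eq_zero (Set.toFinite _) |>.mp (Nat.le_zero.mp hτ)
    have hτσ : τ = σ := by
      funext v
      by_contra hne'
      exact absurd (hempty ▸ (hne' : v ∈ {v | τ v ≠ σ v})) (Set.notMem_empty v)
    subst hτσ
    exact absurd (hwin c hd.symm) (not_lt_of_gt (hc d hd))
  refine ⟨hzero, hone, ?_⟩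
  intro d hmin
  by_contra hdc
  have h1 := hone d hdc
  have h2 := hmin c
  omega
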